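/- Let n ≥ 1 be an integer and let S ⊂ ℤ² be a finite set with |S| = n² such that the subgraph of the square-lattice graph ℒ induced on S is connected. Let b be the number of ordered pairs (v,u) with v ∈ S, u ∉ S, and u adjacent to v in ℒ. Then b ≥ 4n, and moreover 2E + b = 4n², where E is the number of edges of the induced subgraph ℒ[S]. -/

import Mathlib

def latticeGraph : SimpleGraph (ℤ × ℤ) where
  Adj u v := |u.1 - v.1| + |u.2 - v.2| = 1
  symm := by
    constructor
    intro u v h
    rw [abs_sub_comm v.1, abs_sub_comm v.2]
    exact h
  loopless := by
    constructor
    intro u h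
    simp at h

open Finset

private def nbr (v : ℤ × ℤ) : Finset (ℤ × ℤ) :=
  {(v.1 + 1, v.2), (v.1 - 1, v.2), (v.1, v.2 + 1), (v.1, v.2 - 1)}

private lemma mem_nbr (v u : ℤ × ℤ) : u ∈ nbr v ↔ latticeGraph.Adj v u := by
  have h : latticeGraph.Adj v u ↔ |v.1 - u.1| + |v.2 - u.2| = 1 := Iff.rfl
  rw [h, Int.abs_eq_natAbs, Int.abs_eq_natAbs]
  simp only [nbr, mem_insert, mem_singleton, Prod.ext_iff]
  omega

private lemma card_nbr (v : ℤ × ℤ) : (nbr v).card = 4 := by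
  simp only [nbr]
  rw [card_insert_of_notMem, card_insert_of_notMem, card_insert_of_notMem, card_singleton]
  all_goals simp only [mem_insert, mem_singleton, Prod.ext_iff, not_or] <;> omega

private def bd (T : Finset (ℤ × ℤ)) : Finset ((ℤ × ℤ) × (ℤ × ℤ)) :=
  T.biUnion fun v => ((nbr v).filter (fun u => u ∉ T)).image (Prod.mk v)

private def ins (T : Finset (ℤ × ℤ)) : Finset ((ℤ × ℤ) × (ℤ × ℤ)) :=
  T.biUnion fun v => ((nbr v).filter (fun u => u ∈ T)).image (Prod.mk v)

private lemma mem_bd {T : Finset (ℤ × ℤ)} {p : (ℤ × ℤ) × (ℤ × ℤ)} :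
    p ∈ bd T ↔ p.1 ∈ T ∧ p.2 ∉ T ∧ latticeGraph.Adj p.1 p.2 := by
  obtain ⟨a, b⟩ := p
  simp only [bd, mem_biUnion, mem_image, mem_filter, mem_nbr, Prod.mk.injEq]
  constructor
  · rintro ⟨v, hv, u, ⟨hadj, hu⟩, rfl, rfl⟩; exact ⟨hv, hu, hadj⟩
  · rintro ⟨ha, hb, hadj⟩; exact ⟨a, ha, b, ⟨hadj, hb⟩, rfl, rfl⟩

private lemma mem_ins {T : Finset (ℤ × ℤ)} {p : (ℤ × ℤ) × (ℤ × ℤ)} :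
    p ∈ ins T ↔ p.1 ∈ T ∧ p.2 ∈ T ∧ latticeGraph.Adj p.1 p.2 := by
  obtain ⟨a, b⟩ := p
  simp only [ins, mem_biUnion, mem_image, mem_filter, mem_nbr, Prod.mk.injEq]
  constructor
  · rintro ⟨v, hv, u, ⟨hadj, hu⟩, rfl, rfl⟩; exact ⟨hv, hu, hadj⟩
  · rintro ⟨ha, hb, hadj⟩; exact ⟨a, ha, b, ⟨hadj, hb⟩, rfl, rfl⟩

private lemma card_bd_add_ins (T : Finset (ℤ × ℤ)) :
    (bd T).card + (ins T).card = 4 * T.card := by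
  classical
  have hdisj : ∀ (P : ℤ × ℤ → Prop) [DecidablePred P], ∀ v ∈ T, ∀ w ∈ T, v ≠ w →
      Disjoint (((nbr v).filter P).image (Prod.mk v)) (((nbr w).filter P).image (Prod.mk w)) := by
    intro P _ v _ w _ hvw
    rw [Finset.disjoint_left]
    rintro ⟨a, b⟩ h1 h2
    simp only [mem_image, Prod.mk.injEq] at h1 h2
    obtain ⟨_, _, rfl, _⟩ := h1
    obtain ⟨_, _, rfl, _⟩ := h2
    exact hvw rfl
  rw [bd, ins, card_biUnion (hdisj _), card_biUnion (hdisj _), ← Finset.sum_add_distrib]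
  rw [Finset.sum_congr rfl (fun v _ => ?_), Finset.sum_const, smul_eq_mul, mul_comm]
  rw [card_image_of_injective _ (Prod.mk_right_injective _), card_image_of_injective _ (Prod.mk_right_injective _),
    add_comm, card_filter_add_card_filter_not, card_nbr]

private lemma max_spec {s : Finset ℤ} (hs : s.Nonempty) :
    WithBot.unbotD 0 s.max ∈ s ∧ ∀ a ∈ s, a ≤ WithBot.unbotD 0 s.max := by
  obtain ⟨m, hm⟩ := s.max_of_nonempty hs
  rw [hm]
  refine ⟨s.mem_of_max hm, fun a ha => ?_⟩
  have := Finset.le_max ha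
  rw [hm] at this
  exact_mod_cast this

private lemma min_spec {s : Finset ℤ} (hs : s.Nonempty) :
    WithTop.untopD 0 s.min ∈ s ∧ ∀ a ∈ s, WithTop.untopD 0 s.min ≤ a := by
  obtain ⟨m, hm⟩ := s.min_of_nonempty hs
  rw [hm]
  refine ⟨s.mem_of_min hm, fun a ha => ?_⟩
  have := Finset.min_le ha
  rw [hm] at this
  exact_mod_cast this

private def colMax (T : Finset (ℤ × ℤ)) (x : ℤ) : ℤ :=
  WithBot.unbotD 0 (((T.filter (fun v => v.1 = x)).image Prod.snd).max)

private def colMin (T : Finset (ℤ × ℤ)) (x : ℤ) : ℤ :=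
  WithTop.untopD 0 (((T.filter (fun v => v.1 = x)).image Prod.snd).min)

private def rowMax (T : Finset (ℤ × ℤ)) (y : ℤ) : ℤ :=
  WithBot.unbotD 0 (((T.filter (fun v => v.2 = y)).image Prod.fst).max)

private def rowMin (T : Finset (ℤ × ℤ)) (y : ℤ) : ℤ :=
  WithTop.untopD 0 (((T.filter (fun v => v.2 = y)).image Prod.fst).min)

private lemma colMax_spec {T : Finset (ℤ × ℤ)} {x : ℤ} (h : x ∈ T.image Prod.fst) :
    (x, colMax T x) ∈ T ∧ ∀ y, (x, y) ∈ T → y ≤ colMax T x := by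
  classical
  obtain ⟨v, hv, rfl⟩ := Finset.mem_image.mp h
  have hne : ((T.filter (fun w => w.1 = v.1)).image Prod.snd).Nonempty :=
    ⟨v.2, Finset.mem_image.mpr ⟨v, Finset.mem_filter.mpr ⟨hv, rfl⟩, rfl⟩⟩
  obtain ⟨hmem, hub⟩ := max_spec hne
  constructor
  · obtain ⟨w, hw, hw2⟩ := Finset.mem_image.mp hmem
    obtain ⟨hwT, hw1⟩ := Finset.mem_filter.mp hw
    have : w = (v.1, colMax T v.1) := Prod.ext hw1 hw2
    rwa [← this]
  · intro y hy
    exact hub y (Finset.mem_image.mpr ⟨(v.1, y), Finset.mem_filter.mpr ⟨hy, rfl⟩, rfl⟩)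

private lemma colMin_spec {T : Finset (ℤ × ℤ)} {x : ℤ} (h : x ∈ T.image Prod.fst) :
    (x, colMin T x) ∈ T ∧ ∀ y, (x, y) ∈ T → colMin T x ≤ y := by
  classical
  obtain ⟨v, hv, rfl⟩ := Finset.mem_image.mp h
  have hne : ((T.filter (fun w => w.1 = v.1)).image Prod.snd).Nonempty :=
    ⟨v.2, Finset.mem_image.mpr ⟨v, Finset.mem_filter.mpr ⟨hv, rfl⟩, rfl⟩⟩
  obtain ⟨hmem, hub⟩ := min_spec hne
  constructor
  · obtain ⟨w, hw, hw2⟩ := Finset.mem_image.mp hmem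
    obtain ⟨hwT, hw1⟩ := Finset.mem_filter.mp hw
    have : w = (v.1, colMin T v.1) := Prod.ext hw1 hw2
    rwa [← this]
  · intro y hy
    exact hub y (Finset.mem_image.mpr ⟨(v.1, y), Finset.mem_filter.mpr ⟨hy, rfl⟩, rfl⟩)

private lemma rowMax_spec {T : Finset (ℤ × ℤ)} {y : ℤ} (h : y ∈ T.image Prod.snd) :
    (rowMax T y, y) ∈ T ∧ ∀ x, (x, y) ∈ T → x ≤ rowMax T y := by
  classical
  obtain ⟨v, hv, rfl⟩ := Finset.mem_image.mp h
  have hne : ((T.filter (fun w => w.2 = v.2)).image Prod.fst).Nonempty :=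
    ⟨v.1, Finset.mem_image.mpr ⟨v, Finset.mem_filter.mpr ⟨hv, rfl⟩, rfl⟩⟩
  obtain ⟨hmem, hub⟩ := max_spec hne
  constructor
  · obtain ⟨w, hw, hw1⟩ := Finset.mem_image.mp hmem
    obtain ⟨hwT, hw2⟩ := Finset.mem_filter.mp hw
    have : w = (rowMax T v.2, v.2) := Prod.ext hw1 hw2
    rwa [← this]
  · intro x hx
    exact hub x (Finset.mem_image.mpr ⟨(x, v.2), Finset.mem_filter.mpr ⟨hx, rfl⟩, rfl⟩)

private lemma rowMin_spec {T : Finset (ℤ × ℤ)} {y : ℤ} (h : y ∈ T.image Prod.snd) :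
    (rowMin T y, y) ∈ T ∧ ∀ x, (x, y) ∈ T → rowMin T y ≤ x := by
  classical
  obtain ⟨v, hv, rfl⟩ := Finset.mem_image.mp h
  have hne : ((T.filter (fun w => w.2 = v.2)).image Prod.fst).Nonempty :=
    ⟨v.1, Finset.mem_image.mpr ⟨v, Finset.mem_filter.mpr ⟨hv, rfl⟩, rfl⟩⟩
  obtain ⟨hmem, hub⟩ := min_spec hne
  constructor
  · obtain ⟨w, hw, hw1⟩ := Finset.mem_image.mp hmem
    obtain ⟨hwT, hw2⟩ := Finset.mem_filter.mp hw
    have : w = (rowMin T v.2, v.2) := Prod.ext hw1 hw2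
    rwa [← this]
  · intro x hx
    exact hub x (Finset.mem_image.mpr ⟨(x, v.2), Finset.mem_filter.mpr ⟨hx, rfl⟩, rfl⟩)

private lemma card_bd_lower (T : Finset (ℤ × ℤ)) :
    2 * (T.image Prod.fst).card + 2 * (T.image Prod.snd).card ≤ (bd T).card := by
  classical
  have hadj : ∀ u v : ℤ × ℤ, v ∈ nbr u → latticeGraph.Adj u v := fun u v h => (mem_nbr u v).mp h
  set C := T.image Prod.fst with hC
  set R := T.image Prod.snd with hR
  set F : ℤ × ℕ → (ℤ × ℤ) × (ℤ × ℤ) := fun q =>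
    if q.2 = 0 then ((q.1, colMax T q.1), (q.1, colMax T q.1 + 1))
    else if q.2 = 1 then ((q.1, colMin T q.1), (q.1, colMin T q.1 - 1))
    else if q.2 = 2 then ((rowMax T q.1, q.1), (rowMax T q.1 + 1, q.1))
    else ((rowMin T q.1, q.1), (rowMin T q.1 - 1, q.1)) with hF
  have hs : (C ×ˢ ({0, 1} : Finset ℕ) ∪ R ×ˢ ({2, 3} : Finset ℕ)).card
      = 2 * C.card + 2 * R.card := by
    rw [Finset.card_union_of_disjoint, Finset.card_product, Finset.card_product]
    · have h1 : ({0, 1} : Finset ℕ).card = 2 := by decide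
      have h2 : ({2, 3} : Finset ℕ).card = 2 := by decide
      rw [h1, h2]; ring
    · rw [Finset.disjoint_left]
      rintro ⟨a, t⟩ h1 h2
      simp only [Finset.mem_product, Finset.mem_insert, Finset.mem_singleton] at h1 h2
      omega
  rw [← hs]
  apply Finset.card_le_card_of_injOn F
  · rintro ⟨a, t⟩ hq
    simp only [Finset.coe_union, Finset.coe_product, Set.mem_union, Set.mem_prod,
      Finset.mem_coe, Finset.mem_union, Finset.mem_product, Finset.mem_insert,
      Finset.mem_singleton] at hq
    rw [Finset.mem_coe, mem_bd]
    rcases hq with ⟨ha, ht | ht⟩ | ⟨ha, ht | ht⟩ <;> subst ht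
    · obtain ⟨h1, h2⟩ := colMax_spec (hC ▸ ha)
      refine ⟨by simpa [hF] using h1, ?_, ?_⟩
      · simp only [hF]; norm_num
        intro hmem
        have := h2 _ hmem
        omega
      · simp only [hF]; norm_num
        exact hadj _ _ (by simp [nbr])
    · obtain ⟨h1, h2⟩ := colMin_spec (hC ▸ ha)
      refine ⟨by simpa [hF] using h1, ?_, ?_⟩
      · simp only [hF]; norm_num
        intro hmem
        have := h2 _ hmem
        omega
      · simp only [hF]; norm_num
        exact hadj _ _ (by simp [nbr])
    · obtain ⟨h1, h2⟩ := rowMax_spec (hR ▸ ha)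
      refine ⟨by simpa [hF] using h1, ?_, ?_⟩
      · simp only [hF]; norm_num
        intro hmem
        have := h2 _ hmem
        omega
      · simp only [hF]; norm_num
        exact hadj _ _ (by simp [nbr])
    · obtain ⟨h1, h2⟩ := rowMin_spec (hR ▸ ha)
      refine ⟨by simpa [hF] using h1, ?_, ?_⟩
      · simp only [hF]; norm_num
        intro hmem
        have := h2 _ hmem
        omega
      · simp only [hF]; norm_num
        exact hadj _ _ (by simp [nbr])
  · rintro ⟨a, t⟩ ha ⟨b, u⟩ hb heq
    simp only [Finset.coe_union, Finset.coe_product, Set.mem_union, Set.mem_prod,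
      Finset.mem_coe, Finset.mem_insert, Finset.mem_singleton] at ha hb
    obtain ⟨-, ht⟩ | ⟨-, ht⟩ := ha <;> obtain ⟨-, hu⟩ | ⟨-, hu⟩ := hb <;>
      rcases ht with rfl | rfl <;> rcases hu with rfl | rfl <;>
      simp only [hF, Prod.ext_iff] at heq ⊢ <;> norm_num at heq ⊢ <;> omega

private lemma card_ins_eq (S : Set (ℤ × ℤ)) (hfin : S.Finite) :
    2 * (latticeGraph.induce S).edgeSet.ncard = (ins hfin.toFinset).card := by
  classical
  haveI := hfin.fintype
  haveI : DecidableRel (latticeGraph.induce S).Adj := Classical.decRel _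
  have h1 : (latticeGraph.induce S).edgeSet.ncard = (latticeGraph.induce S).edgeFinset.card := by
    rw [Set.ncard_eq_toFinset_card', SimpleGraph.edgeFinset]
  rw [h1, SimpleGraph.two_mul_card_edgeFinset]
  apply Finset.card_bij (fun p _ => ((p.1 : ℤ × ℤ), (p.2 : ℤ × ℤ)))
  · rintro ⟨u, v⟩ hp
    simp only [Finset.mem_filter, Finset.mem_univ, true_and] at hp
    rw [mem_ins]
    exact ⟨hfin.mem_toFinset.mpr u.2, hfin.mem_toFinset.mpr v.2, hp⟩
  · rintro ⟨u, v⟩ - ⟨u', v'⟩ - h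
    simp only [Prod.mk.injEq] at h
    exact Prod.ext (Subtype.ext h.1) (Subtype.ext h.2)
  · rintro ⟨a, b⟩ hp
    rw [mem_ins] at hp
    obtain ⟨ha, hb, hadj⟩ := hp
    refine ⟨(⟨a, hfin.mem_toFinset.mp ha⟩, ⟨b, hfin.mem_toFinset.mp hb⟩), ?_, rfl⟩
    simp only [Finset.mem_filter, Finset.mem_univ, true_and]
    exact hadj

theorem induced_grid_boundary_bound (n : ℕ) (hn : 1 ≤ n) (S : Set (ℤ × ℤ))
    (hfin : S.Finite) (hcard : S.ncard = n ^ 2)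
    (hconn : (latticeGraph.induce S).Connected) :
    4 * n ≤ Set.ncard {p : (ℤ × ℤ) × (ℤ × ℤ) | p.1 ∈ S ∧ p.2 ∉ S ∧ latticeGraph.Adj p.1 p.2} ∧
    2 * (latticeGraph.induce S).edgeSet.ncard
      + Set.ncard {p : (ℤ × ℤ) × (ℤ × ℤ) | p.1 ∈ S ∧ p.2 ∉ S ∧ latticeGraph.Adj p.1 p.2}
      = 4 * n ^ 2 := by
  classical
  have hmem : ∀ v, v ∈ hfin.toFinset ↔ v ∈ S := fun v => hfin.mem_toFinset
  set T := hfin.toFinset with hT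
  have hTcard : T.card = n ^ 2 := by rw [← hcard, Set.ncard_eq_toFinset_card _ hfin]
  have hbdset : {p : (ℤ × ℤ) × (ℤ × ℤ) | p.1 ∈ S ∧ p.2 ∉ S ∧ latticeGraph.Adj p.1 p.2}
      = ↑(bd T) := by
    ext p
    simp only [Set.mem_setOf_eq, Finset.mem_coe, mem_bd, hmem]
  rw [hbdset, Set.ncard_coe_finset]
  have hE := card_ins_eq S hfin
  rw [← hT] at hE
  have hid := card_bd_add_ins T
  constructor
  · have h1 := card_bd_lower T
    set c := (T.image Prod.fst).card with hc
    set r := (T.image Prod.snd).card with hr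
    have hsub : T ⊆ (T.image Prod.fst) ×ˢ (T.image Prod.snd) := by
      intro v hv
      rw [Finset.mem_product]
      exact ⟨Finset.mem_image_of_mem _ hv, Finset.mem_image_of_mem _ hv⟩
    have hcr : n ^ 2 ≤ c * r := by
      calc n ^ 2 = T.card := hTcard.symm
        _ ≤ _ := Finset.card_le_card hsub
        _ = c * r := Finset.card_product _ _
    have h2 : 2 * n ≤ c + r := by
      have hcr' : (n : ℤ) ^ 2 ≤ (c : ℤ) * r := by exact_mod_cast hcr
      have : (2 * n : ℤ) ≤ (c : ℤ) + r := by nlinarith [sq_nonneg ((c : ℤ) - r)]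
      exact_mod_cast this
    omega
  · rw [hE, ← hTcard]
    omega
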